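/- Let V ⊂ P⁵ over F_q be the image of the Segre embedding P¹ × P² ↪ P⁵, defined by f₁ = x₁x₅ - x₂x₄, f₂ = x₁x₆ - x₃x₄, f₃ = x₂x₆ - x₃x₅. Then the number of F_q-rational points of V with at least one coordinate equal to zero is 5q² - q + 2. -/

import Mathlib

open Projectivization
open scoped LinearAlgebra.Projectivization

variable {F : Type} [Field F]

def outer (a : Fin 2 → F) (b : Fin 3 → F) : Fin 6 → F :=
  ![a 0 * b 0, a 0 * b 1, a 0 * b 2, a 1 * b 0, a 1 * b 1, a 1 * b 2]

lemma fived : (5 : Fin 6) = Fin.succ 4 := rfl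

lemma outer_smul (c d : F) (a : Fin 2 → F) (b : Fin 3 → F) :
    outer (c • a) (d • b) = (c * d) • outer a b := by
  funext k
  fin_cases k <;> simp [outer, fived, Matrix.cons_val_succ] <;> ring

lemma outer_entries {a a' : Fin 2 → F} {b b' : Fin 3 → F} {u : F}
    (h : outer a b = u • outer a' b') : ∀ i j, a i * b j = u * (a' i * b' j) := by
  intro i j
  have h' : ∀ k, outer a b k = u * outer a' b' k := fun k => congrFun h k
  have e0 := h' 0; have e1 := h' 1; have e2 := h' 2
  have e3 := h' 3; have e4 := h' 4; have e5 := h' 5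
  simp only [outer, fived, Matrix.cons_val_succ, Matrix.cons_val_zero, Matrix.cons_val_one,
    Matrix.head_cons, Matrix.cons_val_two, Matrix.cons_val_three, Matrix.cons_val_four,
    Matrix.tail_cons] at e0 e1 e2 e3 e4 e5
  fin_cases i <;> fin_cases j <;> simp <;> assumption

lemma outer_ne_zero {a : Fin 2 → F} {b : Fin 3 → F} (ha : a ≠ 0) (hb : b ≠ 0) :
    outer a b ≠ 0 := by
  obtain ⟨i, hi⟩ := Function.ne_iff.1 ha
  obtain ⟨j, hj⟩ := Function.ne_iff.1 hb
  intro h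
  have h' : outer a b = (0:F) • outer a b := by rw [h]; simp
  have := outer_entries h' i j
  simp at this
  tauto

lemma outer_entry_eq (a : Fin 2 → F) (b : Fin 3 → F) (k : Fin 6) :
    ∃ i j, outer a b k = a i * b j := by
  fin_cases k <;>
    simp only [outer, fived, Matrix.cons_val_succ, Matrix.cons_val_zero, Matrix.cons_val_one,
      Matrix.head_cons, Matrix.cons_val_two, Matrix.cons_val_three, Matrix.cons_val_four,
      Matrix.tail_cons] <;>
    [exact ⟨0,0,rfl⟩; exact ⟨0,1,rfl⟩; exact ⟨0,2,rfl⟩; exact ⟨1,0,rfl⟩; exact ⟨1,1,rfl⟩;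
     exact ⟨1,2,rfl⟩]

lemma outer_zero_entry {a : Fin 2 → F} {b : Fin 3 → F} :
    (∃ i, a i = 0) ∨ (∃ j, b j = 0) → ∃ k, outer a b k = 0 := by
  rintro (⟨i, hi⟩ | ⟨j, hj⟩)
  · fin_cases i
    · exact ⟨0, by simp [outer, mul_eq_zero]; exact Or.inl hi⟩
    · exact ⟨3, by simp [outer, mul_eq_zero]; exact Or.inl hi⟩
  · fin_cases j
    · exact ⟨0, by simp [outer, mul_eq_zero]; exact Or.inr hj⟩
    · exact ⟨1, by simp [outer, mul_eq_zero]; exact Or.inr hj⟩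
    · exact ⟨2, by simp [outer, mul_eq_zero]; exact Or.inr hj⟩

noncomputable def projEquiv {n : ℕ} (Q : (Fin n → F) → Prop)
    (hQ : ∀ (c : Fˣ) (v : Fin n → F), Q v → Q ((c : F) • v)) :
    {v : Fin n → F // v ≠ 0 ∧ Q v} ≃ {p : ℙ F (Fin n → F) // Q p.rep} × Fˣ where
  toFun v := ⟨⟨mk F v.1 v.2.1, by
      obtain ⟨c, hc⟩ := exists_smul_eq_mk_rep F v.1 v.2.1
      rw [← hc]; exact hQ c v.1 v.2.2⟩,
    Classical.choose (exists_smul_eq_mk_rep F v.1 v.2.1)⟩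
  invFun x := ⟨((x.2)⁻¹ : Fˣ) • x.1.1.rep, by
    constructor
    · intro h
      apply x.1.1.rep_nonzero
      have : (x.2 : Fˣ) • (((x.2)⁻¹ : Fˣ) • x.1.1.rep) = x.1.1.rep := by
        rw [smul_smul]; simp
      rw [h, smul_zero] at this; exact this.symm
    · exact hQ _ _ x.1.2⟩
  left_inv := by
    intro v
    have hc := Classical.choose_spec (exists_smul_eq_mk_rep F v.1 v.2.1)
    apply Subtype.ext
    simp only
    rw [inv_smul_eq_iff]
    exact hc.symm
  right_inv := by
    rintro ⟨⟨p, hp⟩, c⟩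
    set w := ((c)⁻¹ : Fˣ) • p.rep with hw
    have hwne : w ≠ 0 := by
      intro h
      apply p.rep_nonzero
      have : (c : Fˣ) • w = p.rep := by rw [hw, smul_smul]; simp
      rw [h, smul_zero] at this; exact this.symm
    have hmk : mk F w hwne = p := by
      rw [← mk_rep p]
      apply (mk_eq_mk_iff F _ _ hwne p.rep_nonzero).2
      exact ⟨c⁻¹, rfl⟩
    have hc := Classical.choose_spec (exists_smul_eq_mk_rep F w hwne)
    set c' := Classical.choose (exists_smul_eq_mk_rep F w hwne)
    have hrep : (mk F w hwne).rep = p.rep := by rw [hmk]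
    have : (c' * c⁻¹ : Fˣ) • p.rep = p.rep := by
      rw [← smul_smul]
      rw [← hw] at *
      rw [hc, hrep]
    have hcc : c' = c := by
      have h1 : ((c' * c⁻¹ : Fˣ) : F) • p.rep = ((1 : F)) • p.rep := by
        rw [← Units.smul_def] at *
        simpa using this
      have := smul_left_injective F p.rep_nonzero h1
      have : (c' * c⁻¹ : Fˣ) = 1 := Units.ext (by simpa using this)
      calc c' = c' * c⁻¹ * c := by group
        _ = c := by rw [this]; simp
    apply Prod.ext
    · exact Subtype.ext hmk
    · simpa using hcc

lemma card_proj [Fintype F] {n : ℕ} (Q : (Fin n → F) → Prop)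
    (hQ : ∀ (c : Fˣ) (v : Fin n → F), Q v → Q ((c : F) • v)) :
    Nat.card {p : ℙ F (Fin n → F) // Q p.rep} * (Fintype.card F - 1)
      = Nat.card {v : Fin n → F // v ≠ 0 ∧ Q v} := by
  rw [Nat.card_congr (projEquiv Q hQ), Nat.card_prod]
  congr 1
  rw [Nat.card_units, Nat.card_eq_fintype_card]

lemma card_ne_zero_vec [Fintype F] (n : ℕ) :
    Nat.card {v : Fin n → F // v ≠ 0} = Fintype.card F ^ n - 1 := by
  classical
  rw [Nat.card_eq_fintype_card]
  have h1 := Fintype.card_subtype_compl (fun v : Fin n → F => v = 0)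
  have h2 : Fintype.card {v : Fin n → F // v = 0} = 1 := Fintype.card_subtype_eq 0
  rw [h2] at h1
  convert h1 using 2 <;> simp [Fintype.card_pi]

lemma card_units_vec [Fintype F] (n : ℕ) :
    Nat.card {v : Fin n → F // ∀ i, v i ≠ 0} = (Fintype.card F - 1) ^ n := by
  classical
  have e : {v : Fin n → F // ∀ i, v i ≠ 0} ≃ (Fin n → {x : F // x ≠ 0}) :=
    Equiv.subtypePiEquivPi (p := fun (_ : Fin n) (x : F) => x ≠ 0)
  rw [Nat.card_congr e, Nat.card_pi]
  have : Nat.card {x : F // x ≠ 0} = Fintype.card F - 1 := by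
    rw [← Nat.card_congr (unitsEquivNeZero (G₀ := F)), Nat.card_units, Nat.card_eq_fintype_card]
  simp [this]

lemma card_nonzero_units_vec [Fintype F] (n : ℕ) (hn : n ≠ 0) :
    Nat.card {v : Fin n → F // v ≠ 0 ∧ ∀ i, v i ≠ 0} = (Fintype.card F - 1) ^ n := by
  rw [← card_units_vec]
  apply Nat.card_congr
  apply Equiv.subtypeEquivRight
  intro v
  constructor
  · exact fun h => h.2
  · intro h
    refine ⟨fun h0 => h ⟨0, Nat.pos_of_ne_zero hn⟩ ?_, h⟩
    rw [h0]; rfl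

lemma card_add_compl {X : Type} [Finite X] (P : X → Prop) :
    Nat.card {x // P x} + Nat.card {x // ¬ P x} = Nat.card X := by
  classical
  rw [← Nat.card_sum, Nat.card_congr (Equiv.sumCompl P)]

instance {K V : Type} [DivisionRing K] [AddCommGroup V] [Module K V] [Finite V] :
    Finite (ℙ K V) := Quotient.finite _

lemma exists_outer {v : Fin 6 → F} (hv : v ≠ 0)
    (h1 : v 0 * v 4 = v 1 * v 3) (h2 : v 0 * v 5 = v 2 * v 3) (h3 : v 1 * v 5 = v 2 * v 4) :
    ∃ a b, a ≠ 0 ∧ b ≠ 0 ∧ outer a b = v := by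
  by_cases h0 : v 0 ≠ 0
  · refine ⟨![v 0, v 3], ![1, v 1 / v 0, v 2 / v 0], ?_, ?_, ?_⟩
    · intro h; exact h0 (by simpa using congrFun h 0)
    · intro h; simpa using congrFun h 0
    · funext k
      fin_cases k <;>
        (simp [outer, fived, Matrix.cons_val_succ]; try field_simp) <;>
        (try simp only [← fived]) <;>
        first
          | ring1 | linear_combination h1 | linear_combination -h1 | linear_combination h2
          | linear_combination -h2 | linear_combination h3 | linear_combination -h3
  by_cases h1' : v 1 ≠ 0
  · refine ⟨![v 1, v 4], ![v 0 / v 1, 1, v 2 / v 1], ?_, ?_, ?_⟩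
    · intro h; exact h1' (by simpa using congrFun h 0)
    · intro h; simpa using congrFun h 1
    · funext k
      fin_cases k <;>
        (simp [outer, fived, Matrix.cons_val_succ]; try field_simp) <;>
        (try simp only [← fived]) <;>
        first
          | ring1 | linear_combination h1 | linear_combination -h1 | linear_combination h2
          | linear_combination -h2 | linear_combination h3 | linear_combination -h3
  by_cases h2' : v 2 ≠ 0
  · refine ⟨![v 2, v 5], ![v 0 / v 2, v 1 / v 2, 1], ?_, ?_, ?_⟩
    · intro h; exact h2' (by simpa using congrFun h 0)
    · intro h; simpa using congrFun h 2
    · funext k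
      fin_cases k <;>
        (simp [outer, fived, Matrix.cons_val_succ]; try field_simp) <;>
        (try simp only [← fived]) <;>
        first
          | ring1 | linear_combination h1 | linear_combination -h1 | linear_combination h2
          | linear_combination -h2 | linear_combination h3 | linear_combination -h3
  · push_neg at h0 h1' h2'
    refine ⟨![0, 1], ![v 3, v 4, v 5], ?_, ?_, ?_⟩
    · intro h; simpa using congrFun h 1
    · intro h
      apply hv
      funext k
      have e3 := congrFun h 0; have e4 := congrFun h 1; have e5 := congrFun h 2
      simp at e3 e4 e5
      fin_cases k <;> simp [h0, h1', h2', e3, e4, e5]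
    · funext k
      fin_cases k <;> simp [outer, fived, Matrix.cons_val_succ, h0, h1', h2']

def Mn (v : Fin 6 → F) : Prop :=
  v 0 * v 4 = v 1 * v 3 ∧ v 0 * v 5 = v 2 * v 3 ∧ v 1 * v 5 = v 2 * v 4

lemma Mn_smul (c : F) {v : Fin 6 → F} (h : Mn v) : Mn (c • v) := by
  obtain ⟨e1, e2, e3⟩ := h
  refine ⟨?_, ?_, ?_⟩ <;> simp only [Pi.smul_apply, smul_eq_mul] <;>
    [linear_combination c ^ 2 * e1; linear_combination c ^ 2 * e2;
     linear_combination c ^ 2 * e3]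

lemma Mn_outer (a : Fin 2 → F) (b : Fin 3 → F) : Mn (outer a b) := by
  refine ⟨?_, ?_, ?_⟩ <;> simp [outer, fived, Matrix.cons_val_succ] <;> ring

def SegPred (p : ℙ F (Fin 6 → F)) : Prop := Mn p.rep ∧ ∃ i, p.rep i = 0

lemma pred_mk {a : Fin 2 → F} {b : Fin 3 → F} (ha : a ≠ 0) (hb : b ≠ 0)
    (hz : (∃ i, a i = 0) ∨ (∃ j, b j = 0)) :
    SegPred (mk F (outer a b) (outer_ne_zero ha hb)) := by
  obtain ⟨c, hc⟩ := exists_smul_eq_mk_rep F (outer a b) (outer_ne_zero ha hb)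
  constructor
  · have : Mn ((c : F) • outer a b) := Mn_smul _ (Mn_outer a b)
    rwa [← Units.smul_def, hc] at this
  · obtain ⟨k, hk⟩ := outer_zero_entry hz
    refine ⟨k, ?_⟩
    rw [← hc]
    simp [hk]

lemma seg_inj {A A' : ℙ F (Fin 2 → F)} {B B' : ℙ F (Fin 3 → F)}
    (h : mk F (outer A.rep B.rep) (outer_ne_zero A.rep_nonzero B.rep_nonzero)
       = mk F (outer A'.rep B'.rep) (outer_ne_zero A'.rep_nonzero B'.rep_nonzero)) :
    A = A' ∧ B = B' := by
  obtain ⟨u, hu⟩ := (mk_eq_mk_iff F _ _ _ _).1 h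
  have hu' : outer A.rep B.rep = (u : F) • outer A'.rep B'.rep := by
    rw [← hu, Units.smul_def]
  have hij := outer_entries hu'
  obtain ⟨i0, hi0⟩ := Function.ne_iff.1 A.rep_nonzero
  obtain ⟨j0, hj0⟩ := Function.ne_iff.1 B.rep_nonzero
  simp only [Pi.zero_apply] at hi0 hj0
  have hne : (u : F) * (A'.rep i0 * B'.rep j0) ≠ 0 := by
    rw [← hij i0 j0]; exact mul_ne_zero hi0 hj0
  have ha' : A'.rep i0 ≠ 0 := by intro h0; rw [h0] at hne; simp at hne
  have hb' : B'.rep j0 ≠ 0 := by intro h0; rw [h0] at hne; simp at hne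
  constructor
  · rw [← mk_rep A, ← mk_rep A']
    apply (mk_eq_mk_iff' F _ _ A.rep_nonzero A'.rep_nonzero).2
    refine ⟨(u : F) * B'.rep j0 / B.rep j0, funext fun i => ?_⟩
    have hbj : B.rep j0 ≠ 0 := hj0
    have := hij i j0
    simp only [Pi.smul_apply, smul_eq_mul]
    field_simp
    first | linear_combination this | linear_combination -this
  · rw [← mk_rep B, ← mk_rep B']
    apply (mk_eq_mk_iff' F _ _ B.rep_nonzero B'.rep_nonzero).2
    refine ⟨(u : F) * A'.rep i0 / A.rep i0, funext fun j => ?_⟩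
    have := hij i0 j
    simp only [Pi.smul_apply, smul_eq_mul]
    field_simp
    first | linear_combination this | linear_combination -this

def Z2 (A : ℙ F (Fin 2 → F)) : Prop := ∃ i, A.rep i = 0
def Z3 (B : ℙ F (Fin 3 → F)) : Prop := ∃ j, B.rep j = 0

noncomputable def seg (x : {x : ℙ F (Fin 2 → F) × ℙ F (Fin 3 → F) // Z2 x.1 ∨ Z3 x.2}) :
    {p : ℙ F (Fin 6 → F) // SegPred p} :=
  ⟨mk F (outer x.1.1.rep x.1.2.rep) (outer_ne_zero x.1.1.rep_nonzero x.1.2.rep_nonzero),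
   pred_mk x.1.1.rep_nonzero x.1.2.rep_nonzero x.2⟩

lemma seg_bij : Function.Bijective (seg (F := F)) := by
  constructor
  · rintro x y h
    have h' := congrArg Subtype.val h
    obtain ⟨hA, hB⟩ := seg_inj h'
    exact Subtype.ext (Prod.ext hA hB)
  · rintro ⟨p, hM, hz⟩
    obtain ⟨a, b, ha, hb, hab⟩ := exists_outer p.rep_nonzero hM.1 hM.2.1 hM.2.2
    obtain ⟨c, hc⟩ := exists_smul_eq_mk_rep F a ha
    obtain ⟨d, hd⟩ := exists_smul_eq_mk_rep F b hb
    have hz' : (∃ i, a i = 0) ∨ (∃ j, b j = 0) := by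
      obtain ⟨k, hk⟩ := hz
      rw [← hab] at hk
      obtain ⟨i, j, hij⟩ := outer_entry_eq a b k
      rw [hij] at hk
      rcases mul_eq_zero.1 hk with h' | h'
      · exact Or.inl ⟨i, h'⟩
      · exact Or.inr ⟨j, h'⟩
    have hcond : Z2 (mk F a ha) ∨ Z3 (mk F b hb) := by
      rcases hz' with ⟨i, hi⟩ | ⟨j, hj⟩
      · exact Or.inl ⟨i, by rw [← hc]; simp [hi]⟩
      · exact Or.inr ⟨j, by rw [← hd]; simp [hj]⟩
    refine ⟨⟨(mk F a ha, mk F b hb), hcond⟩, ?_⟩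
    apply Subtype.ext
    show mk F (outer (mk F a ha).rep (mk F b hb).rep) _ = p
    rw [← mk_rep p]
    apply (mk_eq_mk_iff' F _ _ _ p.rep_nonzero).2
    refine ⟨(c : F) * d, ?_⟩
    have e1 : (mk F a ha).rep = (c : F) • a := by rw [← hc, Units.smul_def]
    have e2 : (mk F b hb).rep = (d : F) • b := by rw [← hd, Units.smul_def]
    rw [e1, e2, outer_smul, hab]

lemma card_P1 [Fintype F] :
    Nat.card (ℙ F (Fin 2 → F)) * (Fintype.card F - 1) = Fintype.card F ^ 2 - 1 := by
  have h := card_proj (F := F) (n := 2) (fun _ => True) (fun _ _ _ => trivial)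
  rw [Nat.card_congr (Equiv.subtypeUnivEquiv (fun _ => trivial) :
    {p : ℙ F (Fin 2 → F) // True} ≃ ℙ F (Fin 2 → F))] at h
  rw [h, Nat.card_congr (Equiv.subtypeEquivRight (fun v => by simp) :
    {v : Fin 2 → F // v ≠ 0 ∧ True} ≃ {v : Fin 2 → F // v ≠ 0}), card_ne_zero_vec]

lemma card_P2 [Fintype F] :
    Nat.card (ℙ F (Fin 3 → F)) * (Fintype.card F - 1) = Fintype.card F ^ 3 - 1 := by
  have h := card_proj (F := F) (n := 3) (fun _ => True) (fun _ _ _ => trivial)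
  rw [Nat.card_congr (Equiv.subtypeUnivEquiv (fun _ => trivial) :
    {p : ℙ F (Fin 3 → F) // True} ≃ ℙ F (Fin 3 → F))] at h
  rw [h, Nat.card_congr (Equiv.subtypeEquivRight (fun v => by simp) :
    {v : Fin 3 → F // v ≠ 0 ∧ True} ≃ {v : Fin 3 → F // v ≠ 0}), card_ne_zero_vec]

lemma card_notZ2 [Fintype F] :
    Nat.card {A : ℙ F (Fin 2 → F) // ¬ Z2 A} * (Fintype.card F - 1)
      = (Fintype.card F - 1) ^ 2 := by
  have h := card_proj (F := F) (n := 2) (fun v => ∀ i, v i ≠ 0)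
    (fun c v hv i => by simp [hv i])
  rw [Nat.card_congr (Equiv.subtypeEquivRight (fun A => by simp [Z2]) :
    {A : ℙ F (Fin 2 → F) // ¬ Z2 A} ≃ {A : ℙ F (Fin 2 → F) // ∀ i, A.rep i ≠ 0}), h,
    card_nonzero_units_vec 2 (by norm_num)]

lemma card_notZ3 [Fintype F] :
    Nat.card {B : ℙ F (Fin 3 → F) // ¬ Z3 B} * (Fintype.card F - 1)
      = (Fintype.card F - 1) ^ 3 := by
  have h := card_proj (F := F) (n := 3) (fun v => ∀ i, v i ≠ 0)
    (fun c v hv i => by simp [hv i])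
  rw [Nat.card_congr (Equiv.subtypeEquivRight (fun B => by simp [Z3]) :
    {B : ℙ F (Fin 3 → F) // ¬ Z3 B} ≃ {B : ℙ F (Fin 3 → F) // ∀ i, B.rep i ≠ 0}), h,
    card_nonzero_units_vec 3 (by norm_num)]

theorem stmt14 (F : Type) [Field F] [Fintype F] (q : ℕ) (hq : q = Fintype.card F) :
    Nat.card {p : Projectivization F (Fin 6 → F) |
        (p.rep 0 * p.rep 4 = p.rep 1 * p.rep 3 ∧
         p.rep 0 * p.rep 5 = p.rep 2 * p.rep 3 ∧
         p.rep 1 * p.rep 5 = p.rep 2 * p.rep 4) ∧ ∃ i, p.rep i = 0}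
      = 5 * q ^ 2 - q + 2 := by
  classical
  subst hq
  set q := Fintype.card F with hq
  have hq2 : 2 ≤ q := Fintype.one_lt_card
  have hqpos : 0 < q - 1 := by omega
  -- identify the set with SegPred
  have hset : Nat.card {p : Projectivization F (Fin 6 → F) |
        (p.rep 0 * p.rep 4 = p.rep 1 * p.rep 3 ∧
         p.rep 0 * p.rep 5 = p.rep 2 * p.rep 3 ∧
         p.rep 1 * p.rep 5 = p.rep 2 * p.rep 4) ∧ ∃ i, p.rep i = 0}
      = Nat.card {p : ℙ F (Fin 6 → F) // SegPred p} := rfl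
  rw [hset, ← Nat.card_congr (Equiv.ofBijective _ (seg_bij (F := F)))]
  -- cardinalities of projective spaces
  have n1 : Nat.card (ℙ F (Fin 2 → F)) = q + 1 := by
    apply Nat.eq_of_mul_eq_mul_right hqpos
    rw [card_P1, ← hq]
    have h1 : 1 ≤ q := by omega
    have h2 : 1 ≤ q ^ 2 := Nat.one_le_pow _ _ (by omega)
    zify [h1, h2]
    ring
  have n2 : Nat.card (ℙ F (Fin 3 → F)) = q ^ 2 + q + 1 := by
    apply Nat.eq_of_mul_eq_mul_right hqpos
    rw [card_P2, ← hq]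
    have h1 : 1 ≤ q := by omega
    have h2 : 1 ≤ q ^ 3 := Nat.one_le_pow _ _ (by omega)
    zify [h1, h2]
    ring
  have m1 : Nat.card {A : ℙ F (Fin 2 → F) // ¬ Z2 A} = q - 1 := by
    apply Nat.eq_of_mul_eq_mul_right hqpos
    rw [card_notZ2, sq]
  have m2 : Nat.card {B : ℙ F (Fin 3 → F) // ¬ Z3 B} = (q - 1) ^ 2 := by
    apply Nat.eq_of_mul_eq_mul_right hqpos
    rw [card_notZ3, pow_succ]
  -- complement in the product
  have mprod : Nat.card {x : ℙ F (Fin 2 → F) × ℙ F (Fin 3 → F) // ¬ (Z2 x.1 ∨ Z3 x.2)}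
      = (q - 1) * (q - 1) ^ 2 := by
    rw [Nat.card_congr (Equiv.subtypeEquivRight (fun x => not_or) :
      {x : ℙ F (Fin 2 → F) × ℙ F (Fin 3 → F) // ¬ (Z2 x.1 ∨ Z3 x.2)} ≃
      {x : ℙ F (Fin 2 → F) × ℙ F (Fin 3 → F) // ¬ Z2 x.1 ∧ ¬ Z3 x.2}),
      Nat.card_congr (Equiv.subtypeProdEquivProd (p := fun A : ℙ F (Fin 2 → F) => ¬ Z2 A) (q := fun B : ℙ F (Fin 3 → F) => ¬ Z3 B)), Nat.card_prod, m1, m2]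
  have htot : Nat.card (ℙ F (Fin 2 → F) × ℙ F (Fin 3 → F)) = (q + 1) * (q ^ 2 + q + 1) := by
    rw [Nat.card_prod, n1, n2]
  have hadd := card_add_compl (fun x : ℙ F (Fin 2 → F) × ℙ F (Fin 3 → F) => Z2 x.1 ∨ Z3 x.2)
  rw [mprod, htot] at hadd
  have heq : (5 * q ^ 2 - q + 2) + (q - 1) * (q - 1) ^ 2 = (q + 1) * (q ^ 2 + q + 1) := by
    have h1 : 1 ≤ q := by omega
    have h2 : q ≤ 5 * q ^ 2 := by nlinarith
    zify [h1, h2]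
    ring
  exact Nat.add_right_cancel (hadd.trans heq.symm)
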